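/- Let R be a commutative ring, let A, B, C, D be 2×2 matrices over R with det(A) invertible in R, and let M = [[A,B],[C,D]]. Then the ideal of R generated by all 3×3 minors of M is equal to the ideal generated by the four minors M_ij, i,j ∈ {3,4}, obtained by deleting one of the last two rows and one of the last two columns. -/

import Mathlib

/-- The 3×3 minor of a 4×4 matrix obtained by deleting row `i` and column `j`. -/
def minor4 {R : Type*} [CommRing R] (M : Matrix (Fin 4) (Fin 4) R) (i j : Fin 4) : R :=
  (M.submatrix i.succAbove j.succAbove).det

private lemma succAbove4_0 : ((0 : Fin 4)).succAbove = ![1,2,3] := by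
  funext x; fin_cases x <;> rfl
private lemma succAbove4_1 : ((1 : Fin 4)).succAbove = ![0,2,3] := by
  funext x; fin_cases x <;> rfl
private lemma succAbove4_2 : ((2 : Fin 4)).succAbove = ![0,1,3] := by
  funext x; fin_cases x <;> rfl
private lemma succAbove4_3 : ((3 : Fin 4)).succAbove = ![0,1,2] := by
  funext x; fin_cases x <;> rfl

private lemma minor4_00 {R : Type*} [CommRing R] (x00 x01 x02 x03 x10 x11 x12 x13 x20 x21 x22 x23 x30 x31 x32 x33 : R) :
    minor4 !![x00, x01, x02, x03; x10, x11, x12, x13; x20, x21, x22, x23; x30, x31, x32, x33] 0 0 = x11*x22*x33 + x12*x23*x31 + x13*x21*x32 - x11*x23*x32 - x13*x22*x31 - x12*x21*x33 := by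
  unfold minor4
  rw [succAbove4_0]
  rw [Matrix.det_fin_three]; simp <;> ring
private lemma minor4_01 {R : Type*} [CommRing R] (x00 x01 x02 x03 x10 x11 x12 x13 x20 x21 x22 x23 x30 x31 x32 x33 : R) :
    minor4 !![x00, x01, x02, x03; x10, x11, x12, x13; x20, x21, x22, x23; x30, x31, x32, x33] 0 1 = x10*x22*x33 + x12*x23*x30 + x13*x20*x32 - x10*x23*x32 - x13*x22*x30 - x12*x20*x33 := by
  unfold minor4
  rw [succAbove4_0, succAbove4_1]
  rw [Matrix.det_fin_three]; simp <;> ring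
private lemma minor4_02 {R : Type*} [CommRing R] (x00 x01 x02 x03 x10 x11 x12 x13 x20 x21 x22 x23 x30 x31 x32 x33 : R) :
    minor4 !![x00, x01, x02, x03; x10, x11, x12, x13; x20, x21, x22, x23; x30, x31, x32, x33] 0 2 = x10*x21*x33 + x11*x23*x30 + x13*x20*x31 - x10*x23*x31 - x13*x21*x30 - x11*x20*x33 := by
  unfold minor4
  rw [succAbove4_0, succAbove4_2]
  rw [Matrix.det_fin_three]; simp <;> ring
private lemma minor4_03 {R : Type*} [CommRing R] (x00 x01 x02 x03 x10 x11 x12 x13 x20 x21 x22 x23 x30 x31 x32 x33 : R) :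
    minor4 !![x00, x01, x02, x03; x10, x11, x12, x13; x20, x21, x22, x23; x30, x31, x32, x33] 0 3 = x10*x21*x32 + x11*x22*x30 + x12*x20*x31 - x10*x22*x31 - x12*x21*x30 - x11*x20*x32 := by
  unfold minor4
  rw [succAbove4_0, succAbove4_3]
  rw [Matrix.det_fin_three]; simp <;> ring
private lemma minor4_10 {R : Type*} [CommRing R] (x00 x01 x02 x03 x10 x11 x12 x13 x20 x21 x22 x23 x30 x31 x32 x33 : R) :
    minor4 !![x00, x01, x02, x03; x10, x11, x12, x13; x20, x21, x22, x23; x30, x31, x32, x33] 1 0 = x01*x22*x33 + x02*x23*x31 + x03*x21*x32 - x01*x23*x32 - x03*x22*x31 - x02*x21*x33 := by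
  unfold minor4
  rw [succAbove4_1, succAbove4_0]
  rw [Matrix.det_fin_three]; simp <;> ring
private lemma minor4_11 {R : Type*} [CommRing R] (x00 x01 x02 x03 x10 x11 x12 x13 x20 x21 x22 x23 x30 x31 x32 x33 : R) :
    minor4 !![x00, x01, x02, x03; x10, x11, x12, x13; x20, x21, x22, x23; x30, x31, x32, x33] 1 1 = x00*x22*x33 + x02*x23*x30 + x03*x20*x32 - x00*x23*x32 - x03*x22*x30 - x02*x20*x33 := by
  unfold minor4
  rw [succAbove4_1]
  rw [Matrix.det_fin_three]; simp <;> ring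
private lemma minor4_12 {R : Type*} [CommRing R] (x00 x01 x02 x03 x10 x11 x12 x13 x20 x21 x22 x23 x30 x31 x32 x33 : R) :
    minor4 !![x00, x01, x02, x03; x10, x11, x12, x13; x20, x21, x22, x23; x30, x31, x32, x33] 1 2 = x00*x21*x33 + x01*x23*x30 + x03*x20*x31 - x00*x23*x31 - x03*x21*x30 - x01*x20*x33 := by
  unfold minor4
  rw [succAbove4_1, succAbove4_2]
  rw [Matrix.det_fin_three]; simp <;> ring
private lemma minor4_13 {R : Type*} [CommRing R] (x00 x01 x02 x03 x10 x11 x12 x13 x20 x21 x22 x23 x30 x31 x32 x33 : R) :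
    minor4 !![x00, x01, x02, x03; x10, x11, x12, x13; x20, x21, x22, x23; x30, x31, x32, x33] 1 3 = x00*x21*x32 + x01*x22*x30 + x02*x20*x31 - x00*x22*x31 - x02*x21*x30 - x01*x20*x32 := by
  unfold minor4
  rw [succAbove4_1, succAbove4_3]
  rw [Matrix.det_fin_three]; simp <;> ring
private lemma minor4_20 {R : Type*} [CommRing R] (x00 x01 x02 x03 x10 x11 x12 x13 x20 x21 x22 x23 x30 x31 x32 x33 : R) :
    minor4 !![x00, x01, x02, x03; x10, x11, x12, x13; x20, x21, x22, x23; x30, x31, x32, x33] 2 0 = x01*x12*x33 + x02*x13*x31 + x03*x11*x32 - x01*x13*x32 - x03*x12*x31 - x02*x11*x33 := by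
  unfold minor4
  rw [succAbove4_2, succAbove4_0]
  rw [Matrix.det_fin_three]; simp <;> ring
private lemma minor4_21 {R : Type*} [CommRing R] (x00 x01 x02 x03 x10 x11 x12 x13 x20 x21 x22 x23 x30 x31 x32 x33 : R) :
    minor4 !![x00, x01, x02, x03; x10, x11, x12, x13; x20, x21, x22, x23; x30, x31, x32, x33] 2 1 = x00*x12*x33 + x02*x13*x30 + x03*x10*x32 - x00*x13*x32 - x03*x12*x30 - x02*x10*x33 := by
  unfold minor4
  rw [succAbove4_2, succAbove4_1]
  rw [Matrix.det_fin_three]; simp <;> ring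
private lemma minor4_22 {R : Type*} [CommRing R] (x00 x01 x02 x03 x10 x11 x12 x13 x20 x21 x22 x23 x30 x31 x32 x33 : R) :
    minor4 !![x00, x01, x02, x03; x10, x11, x12, x13; x20, x21, x22, x23; x30, x31, x32, x33] 2 2 = x00*x11*x33 + x01*x13*x30 + x03*x10*x31 - x00*x13*x31 - x03*x11*x30 - x01*x10*x33 := by
  unfold minor4
  rw [succAbove4_2]
  rw [Matrix.det_fin_three]; simp <;> ring
private lemma minor4_23 {R : Type*} [CommRing R] (x00 x01 x02 x03 x10 x11 x12 x13 x20 x21 x22 x23 x30 x31 x32 x33 : R) :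
    minor4 !![x00, x01, x02, x03; x10, x11, x12, x13; x20, x21, x22, x23; x30, x31, x32, x33] 2 3 = x00*x11*x32 + x01*x12*x30 + x02*x10*x31 - x00*x12*x31 - x02*x11*x30 - x01*x10*x32 := by
  unfold minor4
  rw [succAbove4_2, succAbove4_3]
  rw [Matrix.det_fin_three]; simp <;> ring
private lemma minor4_30 {R : Type*} [CommRing R] (x00 x01 x02 x03 x10 x11 x12 x13 x20 x21 x22 x23 x30 x31 x32 x33 : R) :
    minor4 !![x00, x01, x02, x03; x10, x11, x12, x13; x20, x21, x22, x23; x30, x31, x32, x33] 3 0 = x01*x12*x23 + x02*x13*x21 + x03*x11*x22 - x01*x13*x22 - x03*x12*x21 - x02*x11*x23 := by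
  unfold minor4
  rw [succAbove4_3, succAbove4_0]
  rw [Matrix.det_fin_three]; simp <;> ring
private lemma minor4_31 {R : Type*} [CommRing R] (x00 x01 x02 x03 x10 x11 x12 x13 x20 x21 x22 x23 x30 x31 x32 x33 : R) :
    minor4 !![x00, x01, x02, x03; x10, x11, x12, x13; x20, x21, x22, x23; x30, x31, x32, x33] 3 1 = x00*x12*x23 + x02*x13*x20 + x03*x10*x22 - x00*x13*x22 - x03*x12*x20 - x02*x10*x23 := by
  unfold minor4
  rw [succAbove4_3, succAbove4_1]
  rw [Matrix.det_fin_three]; simp <;> ring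
private lemma minor4_32 {R : Type*} [CommRing R] (x00 x01 x02 x03 x10 x11 x12 x13 x20 x21 x22 x23 x30 x31 x32 x33 : R) :
    minor4 !![x00, x01, x02, x03; x10, x11, x12, x13; x20, x21, x22, x23; x30, x31, x32, x33] 3 2 = x00*x11*x23 + x01*x13*x20 + x03*x10*x21 - x00*x13*x21 - x03*x11*x20 - x01*x10*x23 := by
  unfold minor4
  rw [succAbove4_3, succAbove4_2]
  rw [Matrix.det_fin_three]; simp <;> ring
private lemma minor4_33 {R : Type*} [CommRing R] (x00 x01 x02 x03 x10 x11 x12 x13 x20 x21 x22 x23 x30 x31 x32 x33 : R) :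
    minor4 !![x00, x01, x02, x03; x10, x11, x12, x13; x20, x21, x22, x23; x30, x31, x32, x33] 3 3 = x00*x11*x22 + x01*x12*x20 + x02*x10*x21 - x00*x12*x21 - x02*x11*x20 - x01*x10*x22 := by
  unfold minor4
  rw [succAbove4_3]
  rw [Matrix.det_fin_three]; simp <;> ring

private lemma span4_mem {R : Type*} [CommRing R] (a b c e x y z w : R) :
    x*a + y*b + z*c + w*e ∈ Ideal.span {a, b, c, e} := by
  have ha : a ∈ Ideal.span {a, b, c, e} := Ideal.subset_span (by simp)
  have hb : b ∈ Ideal.span {a, b, c, e} := Ideal.subset_span (by simp)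
  have hc : c ∈ Ideal.span {a, b, c, e} := Ideal.subset_span (by simp)
  have he : e ∈ Ideal.span {a, b, c, e} := Ideal.subset_span (by simp)
  exact add_mem (add_mem (add_mem (Ideal.mul_mem_left _ x ha) (Ideal.mul_mem_left _ y hb))
    (Ideal.mul_mem_left _ z hc)) (Ideal.mul_mem_left _ w he)

private lemma unit_mul_mem {R : Type*} [CommRing R] {d u m : R} {I : Ideal R}
    (hu : u * d = 1) (h : d * m ∈ I) : m ∈ I := by
  have hm : m = u * (d * m) := by linear_combination (-m) * hu
  rw [hm]; exact I.mul_mem_left u h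

private lemma span4_helper {R : Type*} [CommRing R] {d u : R} (hu : u * d = 1)
    {a b c e m : R} (h : ∃ x y z w, d ^ 2 * m = x*a + y*b + z*c + w*e) :
    m ∈ Ideal.span {a, b, c, e} := by
  obtain ⟨x, y, z, w, h⟩ := h
  refine unit_mul_mem hu (unit_mul_mem hu ?_)
  rw [show d * (d * m) = d ^ 2 * m by ring, h]
  exact span4_mem a b c e x y z w

set_option maxHeartbeats 1000000 in
theorem ideal_of_three_minors_eq
    (R : Type*) [CommRing R] (A B C D : Matrix (Fin 2) (Fin 2) R)
    (hA : IsUnit A.det)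
    (M : Matrix (Fin 4) (Fin 4) R)
    (hM : M = !![A 0 0, A 0 1, B 0 0, B 0 1;
                 A 1 0, A 1 1, B 1 0, B 1 1;
                 C 0 0, C 0 1, D 0 0, D 0 1;
                 C 1 0, C 1 1, D 1 0, D 1 1]) :
    Ideal.span {r : R | ∃ i j : Fin 4, r = minor4 M i j}
      = Ideal.span {minor4 M 3 3, minor4 M 3 2, minor4 M 2 3, minor4 M 2 2} := by
  obtain ⟨v, hv⟩ := hA
  have hu : (↑v⁻¹ : R) * A.det = 1 := by rw [← hv]; exact v.inv_mul
  apply le_antisymm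
  · rw [Ideal.span_le]
    rintro r ⟨i, j, rfl⟩
    simp only [SetLike.mem_coe]
    fin_cases i <;> fin_cases j
    · refine span4_helper (m := minor4 M 0 0) hu ⟨((C 1 0*A 1 1 - C 1 1*A 1 0)*(A 1 1*B 0 1 - A 0 1*B 1 1) + A 1 1*minor4 M 2 2), (-(C 1 0*A 1 1 - C 1 1*A 1 0)*(A 1 1*B 0 0 - A 0 1*B 1 0) - (A 1 1*minor4 M 2 3)), (-(C 0 0*A 1 1 - C 0 1*A 1 0)*(A 1 1*B 0 1 - A 0 1*B 1 1)), ((C 0 0*A 1 1 - C 0 1*A 1 0)*(A 1 1*B 0 0 - A 0 1*B 1 0)), ?_⟩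
      rw [hM, minor4_00, minor4_33, minor4_32, minor4_23, minor4_22, Matrix.det_fin_two]
      ring
    · refine span4_helper (m := minor4 M 0 1) hu ⟨(-(C 1 0*A 1 1 - C 1 1*A 1 0)*(A 0 0*B 1 1 - A 1 0*B 0 1) + A 1 0*minor4 M 2 2), ((C 1 0*A 1 1 - C 1 1*A 1 0)*(A 0 0*B 1 0 - A 1 0*B 0 0) - (A 1 0*minor4 M 2 3)), ((C 0 0*A 1 1 - C 0 1*A 1 0)*(A 0 0*B 1 1 - A 1 0*B 0 1)), (-(C 0 0*A 1 1 - C 0 1*A 1 0)*(A 0 0*B 1 0 - A 1 0*B 0 0)), ?_⟩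
      rw [hM, minor4_01, minor4_33, minor4_32, minor4_23, minor4_22, Matrix.det_fin_two]
      ring
    · refine span4_helper (m := minor4 M 0 2) hu ⟨0, (A.det*(C 1 0*A 1 1 - C 1 1*A 1 0)), 0, (-A.det*(C 0 0*A 1 1 - C 0 1*A 1 0)), ?_⟩
      rw [hM, minor4_02, minor4_33, minor4_32, minor4_23, minor4_22, Matrix.det_fin_two]
      ring
    · refine span4_helper (m := minor4 M 0 3) hu ⟨(A.det*(C 1 0*A 1 1 - C 1 1*A 1 0)), 0, (-A.det*(C 0 0*A 1 1 - C 0 1*A 1 0)), 0, ?_⟩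
      rw [hM, minor4_03, minor4_33, minor4_32, minor4_23, minor4_22, Matrix.det_fin_two]
      ring
    · refine span4_helper (m := minor4 M 1 0) hu ⟨(-(C 1 1*A 0 0 - C 1 0*A 0 1)*(A 1 1*B 0 1 - A 0 1*B 1 1) + A 0 1*minor4 M 2 2), ((C 1 1*A 0 0 - C 1 0*A 0 1)*(A 1 1*B 0 0 - A 0 1*B 1 0) - (A 0 1*minor4 M 2 3)), ((C 0 1*A 0 0 - C 0 0*A 0 1)*(A 1 1*B 0 1 - A 0 1*B 1 1)), (-(C 0 1*A 0 0 - C 0 0*A 0 1)*(A 1 1*B 0 0 - A 0 1*B 1 0)), ?_⟩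
      rw [hM, minor4_10, minor4_33, minor4_32, minor4_23, minor4_22, Matrix.det_fin_two]
      ring
    · refine span4_helper (m := minor4 M 1 1) hu ⟨((C 1 1*A 0 0 - C 1 0*A 0 1)*(A 0 0*B 1 1 - A 1 0*B 0 1) + A 0 0*minor4 M 2 2), (-(C 1 1*A 0 0 - C 1 0*A 0 1)*(A 0 0*B 1 0 - A 1 0*B 0 0) - (A 0 0*minor4 M 2 3)), (-(C 0 1*A 0 0 - C 0 0*A 0 1)*(A 0 0*B 1 1 - A 1 0*B 0 1)), ((C 0 1*A 0 0 - C 0 0*A 0 1)*(A 0 0*B 1 0 - A 1 0*B 0 0)), ?_⟩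
      rw [hM, minor4_11, minor4_33, minor4_32, minor4_23, minor4_22, Matrix.det_fin_two]
      ring
    · refine span4_helper (m := minor4 M 1 2) hu ⟨0, (-A.det*(C 1 1*A 0 0 - C 1 0*A 0 1)), 0, (A.det*(C 0 1*A 0 0 - C 0 0*A 0 1)), ?_⟩
      rw [hM, minor4_12, minor4_33, minor4_32, minor4_23, minor4_22, Matrix.det_fin_two]
      ring
    · refine span4_helper (m := minor4 M 1 3) hu ⟨(-A.det*(C 1 1*A 0 0 - C 1 0*A 0 1)), 0, (A.det*(C 0 1*A 0 0 - C 0 0*A 0 1)), 0, ?_⟩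
      rw [hM, minor4_13, minor4_33, minor4_32, minor4_23, minor4_22, Matrix.det_fin_two]
      ring
    · refine span4_helper (m := minor4 M 2 0) hu ⟨0, 0, (A.det*(A 1 1*B 0 1 - A 0 1*B 1 1)), (-A.det*(A 1 1*B 0 0 - A 0 1*B 1 0)), ?_⟩
      rw [hM, minor4_20, minor4_33, minor4_32, minor4_23, minor4_22, Matrix.det_fin_two]
      ring
    · refine span4_helper (m := minor4 M 2 1) hu ⟨0, 0, (-A.det*(A 0 0*B 1 1 - A 1 0*B 0 1)), (A.det*(A 0 0*B 1 0 - A 1 0*B 0 0)), ?_⟩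
      rw [hM, minor4_21, minor4_33, minor4_32, minor4_23, minor4_22, Matrix.det_fin_two]
      ring
    · exact Ideal.subset_span (Or.inr (Or.inr (Or.inr rfl)))
    · exact Ideal.subset_span (Or.inr (Or.inr (Or.inl rfl)))
    · refine span4_helper (m := minor4 M 3 0) hu ⟨(A.det*(A 1 1*B 0 1 - A 0 1*B 1 1)), (-A.det*(A 1 1*B 0 0 - A 0 1*B 1 0)), 0, 0, ?_⟩
      rw [hM, minor4_30, minor4_33, minor4_32, minor4_23, minor4_22, Matrix.det_fin_two]
      ring
    · refine span4_helper (m := minor4 M 3 1) hu ⟨(-A.det*(A 0 0*B 1 1 - A 1 0*B 0 1)), (A.det*(A 0 0*B 1 0 - A 1 0*B 0 0)), 0, 0, ?_⟩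
      rw [hM, minor4_31, minor4_33, minor4_32, minor4_23, minor4_22, Matrix.det_fin_two]
      ring
    · exact Ideal.subset_span (Or.inr (Or.inl rfl))
    · exact Ideal.subset_span (Or.inl rfl)
  · rw [Ideal.span_le]
    intro r hr
    simp only [Set.mem_insert_iff, Set.mem_singleton_iff] at hr
    rcases hr with h | h | h | h <;> subst h <;>
      exact Ideal.subset_span ⟨_, _, rfl⟩
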